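/- Let S be a nonempty finite set, r : S → (0,1] with distinct values p₁ < ... < pₙ (p₀ := 0), q a real-valued function on subsets of S with q(∅) = 0, and write q_i := q(D(S;p_i,r)) where D(S;u,r) = {s ∈ S : u < r(s)}. Define the estimator on a nonempty sampled set obtained with U ∈ [p_i, p_{i+1}) as ê = Σ_{j=i+1}^{n} (q_{j−1} − q_j)/p_j, and ê = 0 when U ≥ pₙ. Then for U uniform on [0,1), E[ê] = q(S). -/

import Mathlib

open MeasureTheory

lemma aux_indicator (a c : ℝ) :
    (fun u : ℝ => if u < a then c else 0) = (Set.Iio a).indicator (fun _ => c) := by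
  funext u; by_cases h : u < a <;> simp [Set.indicator, Set.mem_Iio, h]

lemma aux_integrable (a c : ℝ) :
    MeasureTheory.IntegrableOn (fun u => if u < a then c else 0) (Set.Ico (0:ℝ) 1) := by
  rw [aux_indicator]
  exact (MeasureTheory.integrableOn_const (by simp [Real.volume_Ico]) (by simp)).indicator
    measurableSet_Iio

lemma aux_integral (a c : ℝ) (ha : 0 ≤ a) (ha1 : a ≤ 1) :
    ∫ u in Set.Ico (0:ℝ) 1, (if u < a then c else 0) = c * a := by
  rw [aux_indicator, MeasureTheory.setIntegral_indicator measurableSet_Iio,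
    Set.Ico_inter_Iio, min_eq_right ha1, MeasureTheory.setIntegral_const]
  simp [Real.volume_Ico, ha, mul_comm]

theorem stmt_2 {α : Type*} [DecidableEq α] (S : Finset α) (hS : S.Nonempty)
    (r : α → ℝ) (hr : ∀ s ∈ S, r s ∈ Set.Ioc (0 : ℝ) 1)
    (n : ℕ) (hn : 1 ≤ n) (p : ℕ → ℝ) (hp0 : p 0 = 0)
    (hmono : ∀ i < n, p i < p (i + 1))
    (himg : S.image r = (Finset.range n).image (fun j => p (j + 1)))
    (q : Finset α → ℝ) (hq0 : q (∅ : Finset α) = 0) :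
    (∫ u in Set.Ico (0 : ℝ) 1,
        ∑ j ∈ Finset.range n,
          if u < p (j + 1) then
            (q (S.filter (fun s => p j < r s)) - q (S.filter (fun s => p (j + 1) < r s)))
              / p (j + 1)
          else 0)
      = q S := by
  have hle : ∀ i j, i ≤ j → j ≤ n → p i ≤ p j := by
    intro i j hij hjn
    induction j with
    | zero => have : i = 0 := Nat.le_zero.1 hij; simp [this]
    | succ j ih =>
      rcases Nat.lt_or_ge i (j+1) with h | h
      · exact le_trans (ih (by omega) (by omega)) (le_of_lt (hmono j (by omega)))
      · have : i = j + 1 := by omega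
        simp [this]
  have hpn1 : p n ≤ 1 := by
    have hmem : p n ∈ (Finset.range n).image (fun j => p (j + 1)) :=
      Finset.mem_image.2 ⟨n - 1, Finset.mem_range.2 (by omega), by congr 1; omega⟩
    rw [← himg] at hmem
    obtain ⟨s, hs, hrs⟩ := Finset.mem_image.1 hmem
    rw [← hrs]; exact (hr s hs).2
  have hppos : ∀ j, j < n → 0 < p (j + 1) := by
    intro j hj
    calc (0:ℝ) = p 0 := hp0.symm
    _ ≤ p j := hle 0 j (by omega) (by omega)
    _ < p (j+1) := hmono j hj
  rw [MeasureTheory.integral_finset_sum _ (fun j _ => aux_integrable (p (j+1)) _)]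
  have hterm : ∀ j ∈ Finset.range n,
      (∫ u in Set.Ico (0:ℝ) 1,
        if u < p (j + 1) then
          (q (S.filter (fun s => p j < r s)) - q (S.filter (fun s => p (j + 1) < r s)))
            / p (j + 1)
        else 0)
      = q (S.filter (fun s => p j < r s)) - q (S.filter (fun s => p (j + 1) < r s)) := by
    intro j hj
    have hj' := Finset.mem_range.1 hj
    rw [aux_integral _ _ (le_of_lt (hppos j hj')) (le_trans (hle (j+1) n (by omega) le_rfl) hpn1)]
    exact div_mul_cancel₀ _ (ne_of_gt (hppos j hj'))
  rw [Finset.sum_congr rfl hterm,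
    Finset.sum_range_sub' (fun j => q (S.filter (fun s => p j < r s)))]
  have hD0 : S.filter (fun s => p 0 < r s) = S :=
    Finset.filter_eq_self.2 (fun s hs => by rw [hp0]; exact (hr s hs).1)
  have hDn : S.filter (fun s => p n < r s) = ∅ := by
    refine Finset.filter_eq_empty_iff.2 (fun s hs => ?_)
    have : r s ∈ (Finset.range n).image (fun j => p (j + 1)) := by
      rw [← himg]; exact Finset.mem_image_of_mem r hs
    obtain ⟨k, hk, hks⟩ := Finset.mem_image.1 this
    rw [← hks]
    exact not_lt.2 (hle (k+1) n (Finset.mem_range.1 hk) le_rfl)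
  rw [hD0, hDn, hq0, sub_zero]
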